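/- Let R be a ring in which every finite module admits a finite free resolution and in which every unimodular tuple (f₁,…,f_r) is equivalent to (1,0,…,0) via a matrix in GL_r(R). Then every finite projective R-module is free. -/

import Mathlib

universe u

/-- `HasFFRLength R s M` : the `R`-module `M` admits a finite free resolution of
length at most `s`: either `M` is finite free, or there is a surjection from a
finite free module whose kernel admits a resolution of smaller length. -/
def HasFFRLength (R : Type u) [CommRing R] :
    (s : ℕ) → (M : Type u) → [AddCommGroup M] → [Module R M] → Prop
  | 0, M, _, _ => Module.Free R M ∧ Module.Finite R M
  | (s + 1), M, _, _ => (Module.Free R M ∧ Module.Finite R M) ∨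
      ∃ (k : ℕ) (π : ((Fin k → R) →ₗ[R] M)), Function.Surjective π ∧
        HasFFRLength R s (LinearMap.ker π)

/-- the `R`-module `M` admits a finite free resolution. -/
def HasFiniteFreeResolution (R : Type u) [CommRing R]
    (M : Type u) [AddCommGroup M] [Module R M] : Prop :=
  ∃ s : ℕ, HasFFRLength R s M

section Aux
variable (R : Type u) [CommRing R]

/-- Linear version of `Equiv.piFinSucc`. -/
noncomputable def auxPiFinSucc (k : ℕ) : (Fin (k + 1) → R) ≃ₗ[R] R × (Fin k → R) :=
  LinearEquiv.ofLinear
    (LinearMap.prod (LinearMap.proj 0) (LinearMap.pi fun i => LinearMap.proj i.succ))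
    { toFun := fun p => Fin.cons p.1 p.2
      map_add' := by intro p q; funext i; cases i using Fin.cases <;> simp
      map_smul' := by intro c p; funext i; cases i using Fin.cases <;> simp }
    (by ext p <;> simp)
    (by
      apply LinearMap.ext; intro f; funext i
      cases i using Fin.cases <;> simp)

variable (Q : Type u) [AddCommGroup Q] [Module R Q]

/-- `Q ≃ Q × R^0`. -/
noncomputable def auxProdZero : Q ≃ₗ[R] Q × (Fin 0 → R) :=
  LinearEquiv.ofLinear (LinearMap.prod LinearMap.id 0) (LinearMap.fst R Q _)
    (by
      apply LinearMap.ext; intro p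
      refine Prod.ext rfl ?_
      funext i; exact i.elim0)
    (by apply LinearMap.ext; intro q; rfl)

end Aux

section FreeFin
variable {R : Type u} [CommRing R]

theorem auxFreeFin (M : Type u) [AddCommGroup M] [Module R M]
    [Module.Free R M] [Module.Finite R M] :
    ∃ m, Nonempty (M ≃ₗ[R] (Fin m → R)) := by
  let ι := Module.Free.ChooseBasisIndex R M
  let b : Module.Basis ι R M := Module.Free.chooseBasis R M
  exact ⟨Fintype.card ι,
    ⟨b.equivFun.trans (LinearEquiv.funCongrLeft R R (Fintype.equivFin ι).symm)⟩⟩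

end FreeFin

section Split
variable {R : Type u} [CommRing R] {Q N : Type u}
  [AddCommGroup Q] [Module R Q] [AddCommGroup N] [Module R N]

/-- If `Q × R ≃ R × N` carrying `(0,1)` to `(1,0)`, then `Q ≃ N`. -/
noncomputable def auxSplitOff (h : (Q × R) ≃ₗ[R] (R × N)) (h0 : h (0, 1) = (1, 0)) :
    Q ≃ₗ[R] N := by
  have hsymm : h.symm (1, 0) = (0, 1) := by rw [← h0, h.symm_apply_apply]
  refine LinearEquiv.ofLinear
    ((LinearMap.snd R R N).comp ((h : (Q × R) →ₗ[R] (R × N)).comp (LinearMap.inl R Q R)))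
    ((LinearMap.fst R Q R).comp ((h.symm : (R × N) →ₗ[R] (Q × R)).comp (LinearMap.inr R R N)))
    ?_ ?_
  · apply LinearMap.ext; intro n
    simp only [LinearMap.coe_comp, Function.comp_apply,
      LinearMap.inr_apply, LinearMap.fst_apply, LinearMap.snd_apply, LinearMap.inl_apply,
      LinearEquiv.coe_coe, LinearMap.id_apply]
    have e1 : ((h.symm ((0 : R), n)).1, (0 : R))
        = h.symm (0, n) - (h.symm ((0 : R), n)).2 • ((0 : Q), (1 : R)) := by
      ext <;> simp
    have e2 : h ((h.symm ((0 : R), n)).1, (0 : R))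
        = ((0 : R), n) - (h.symm ((0 : R), n)).2 • ((1 : R), (0 : N)) := by
      rw [e1, map_sub, h.apply_symm_apply, map_smul, ← hsymm, h.apply_symm_apply]
    rw [e2]; simp
  · apply LinearMap.ext; intro q
    simp only [LinearMap.coe_comp, Function.comp_apply,
      LinearMap.inr_apply, LinearMap.fst_apply, LinearMap.snd_apply, LinearMap.inl_apply,
      LinearEquiv.coe_coe, LinearMap.id_apply]
    have e1 : ((0 : R), (h (q, (0 : R))).2)
        = h (q, 0) - (h (q, (0 : R))).1 • ((1 : R), (0 : N)) := by
      ext <;> simp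
    have e2 : h.symm ((0 : R), (h (q, (0 : R))).2)
        = (q, (0 : R)) - (h (q, (0 : R))).1 • ((0 : Q), (1 : R)) := by
      rw [e1, map_sub, h.symm_apply_apply, map_smul, hsymm]
    rw [e2]; simp

end Split

section Key
variable {R : Type u} [CommRing R]

/-- The key unimodular step: if `Q × R ≃ R^{k+1}` then `Q ≃ R^k`. -/
theorem auxKeyStep
    (hUnimod : ∀ (r : ℕ) (f : Fin r → R), Ideal.span (Set.range f) = ⊤ →
      ∃ M : GL (Fin r) R, (M : Matrix (Fin r) (Fin r) R).mulVec f
        = fun i : Fin r => if (i : ℕ) = 0 then (1 : R) else (0 : R))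
    {Q : Type u} [AddCommGroup Q] [Module R Q] {k : ℕ}
    (h : (Q × R) ≃ₗ[R] (Fin (k + 1) → R)) :
    Nonempty (Q ≃ₗ[R] (Fin k → R)) := by
  set v : Fin (k + 1) → R := h (0, 1) with hv
  have hspan : Ideal.span (Set.range v) = ⊤ := by
    rw [Ideal.eq_top_iff_one]
    set φ : (Fin (k + 1) → R) →ₗ[R] R :=
      (LinearMap.snd R Q R).comp (h.symm : (Fin (k + 1) → R) →ₗ[R] (Q × R)) with hφ
    have h1 : φ v = 1 := by simp [hφ, hv]
    have expand : φ v = ∑ i, v i * φ (fun j => if i = j then 1 else 0) := by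
      conv_lhs => rw [pi_eq_sum_univ v]
      rw [map_sum]
      simp [smul_eq_mul]
    rw [← h1, expand]
    exact Ideal.sum_mem _ fun i _ =>
      Ideal.mul_mem_right _ _ (Ideal.subset_span ⟨i, rfl⟩)
  obtain ⟨M, hM⟩ := hUnimod (k + 1) v hspan
  have hMM : (↑M : Matrix (Fin (k + 1)) (Fin (k + 1)) R)
      * (↑(M⁻¹) : Matrix (Fin (k + 1)) (Fin (k + 1)) R) = 1 := by
    rw [← Matrix.GeneralLinearGroup.coe_mul, mul_inv_cancel,
      Matrix.GeneralLinearGroup.coe_one]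
  have hMM' : (↑(M⁻¹) : Matrix (Fin (k + 1)) (Fin (k + 1)) R)
      * (↑M : Matrix (Fin (k + 1)) (Fin (k + 1)) R) = 1 := by
    rw [← Matrix.GeneralLinearGroup.coe_mul, inv_mul_cancel,
      Matrix.GeneralLinearGroup.coe_one]
  let g : (Fin (k + 1) → R) ≃ₗ[R] (Fin (k + 1) → R) :=
    LinearEquiv.ofLinear
      (Matrix.mulVecLin (↑M : Matrix (Fin (k + 1)) (Fin (k + 1)) R))
      (Matrix.mulVecLin (↑(M⁻¹) : Matrix (Fin (k + 1)) (Fin (k + 1)) R))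
      (by rw [← Matrix.mulVecLin_mul, hMM, Matrix.mulVecLin_one])
      (by rw [← Matrix.mulVecLin_mul, hMM', Matrix.mulVecLin_one])
  let e : (Q × R) ≃ₗ[R] (R × (Fin k → R)) := (h.trans g).trans (auxPiFinSucc R k)
  have he : e ((0 : Q), (1 : R)) = ((1 : R), (0 : Fin k → R)) := by
    have hg : g (h (0, 1)) = fun i : Fin (k + 1) => if (i : ℕ) = 0 then (1 : R) else 0 := by
      show Matrix.mulVecLin (↑M : Matrix (Fin (k + 1)) (Fin (k + 1)) R) v = _
      rw [Matrix.mulVecLin_apply, hM]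
    show auxPiFinSucc R k (g (h (0, 1))) = _
    rw [hg]
    refine Prod.ext ?_ ?_
    · simp [auxPiFinSucc]
    · funext i
      simp [auxPiFinSucc, Fin.val_succ]
  exact ⟨auxSplitOff e he⟩

/-- Stably free implies free, given the unimodular hypothesis. -/
theorem auxStablyFree
    (hUnimod : ∀ (r : ℕ) (f : Fin r → R), Ideal.span (Set.range f) = ⊤ →
      ∃ M : GL (Fin r) R, (M : Matrix (Fin r) (Fin r) R).mulVec f
        = fun i : Fin r => if (i : ℕ) = 0 then (1 : R) else (0 : R)) :
    ∀ (n : ℕ) (Q : Type u) [AddCommGroup Q] [Module R Q],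
      (∃ m, Nonempty ((Q × (Fin n → R)) ≃ₗ[R] (Fin m → R))) → Module.Free R Q := by
  intro n
  induction n with
  | zero =>
    intro Q _ _ hm
    obtain ⟨m, ⟨e⟩⟩ := hm
    let eq1 : (Fin m → R) ≃ₗ[R] Q := ((auxProdZero R Q).trans e).symm
    exact Module.Free.of_equiv eq1
  | succ n ih =>
    intro Q _ _ hm
    obtain ⟨m, ⟨e⟩⟩ := hm
    let shuffle : ((Q × (Fin n → R)) × R) ≃ₗ[R] (Q × (Fin (n + 1) → R)) :=
      (LinearEquiv.prodAssoc R Q (Fin n → R) R).trans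
        (LinearEquiv.prodCongr (LinearEquiv.refl R Q)
          ((LinearEquiv.prodComm R (Fin n → R) R).trans (auxPiFinSucc R n).symm))
    let e' : ((Q × (Fin n → R)) × R) ≃ₗ[R] (Fin m → R) := shuffle.trans e
    cases m with
    | zero =>
      have hsub : Subsingleton ((Q × (Fin n → R)) × R) := e'.toEquiv.subsingleton
      have hR : Subsingleton R :=
        ⟨fun a b => congrArg Prod.snd
          (Subsingleton.elim ((((0 : Q), (0 : Fin n → R)), a)) ((((0 : Q), (0 : Fin n → R)), b)))⟩
      exact Module.Free.of_subsingleton' R Q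
    | succ k =>
      obtain ⟨e2⟩ := auxKeyStep hUnimod e'
      exact ih Q ⟨k, ⟨e2⟩⟩

/-- A projective module with a finite free resolution is stably free. -/
theorem auxFFRStablyFree :
    ∀ (s : ℕ) (M : Type u) [AddCommGroup M] [Module R M], Module.Projective R M →
      HasFFRLength R s M →
      ∃ n m, Nonempty ((M × (Fin n → R)) ≃ₗ[R] (Fin m → R)) := by
  intro s
  induction s with
  | zero =>
    intro M _ _ _ h
    obtain ⟨hfree, hfin⟩ := h
    obtain ⟨m, ⟨eM⟩⟩ := auxFreeFin (R := R) M
    exact ⟨0, m, ⟨(auxProdZero R M).symm.trans eM⟩⟩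
  | succ s ih =>
    intro M _ _ hproj h
    rcases h with ⟨hfree, hfin⟩ | ⟨k, π, hsurj, hker⟩
    · obtain ⟨m, ⟨eM⟩⟩ := auxFreeFin (R := R) M
      exact ⟨0, m, ⟨(auxProdZero R M).symm.trans eM⟩⟩
    · obtain ⟨σ, hσ⟩ := Module.projective_lifting_property π LinearMap.id hsurj
      have hσ' : ∀ x, π (σ x) = x := fun x => LinearMap.congr_fun hσ x
      let d : (Fin k → R) →ₗ[R] (Fin k → R) := LinearMap.id - σ.comp π
      have hd : ∀ x : Fin k → R, d x ∈ LinearMap.ker π := by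
        intro x
        simp [d, LinearMap.mem_ker, hσ' (π x)]
      let fwd : (Fin k → R) →ₗ[R] (LinearMap.ker π × M) :=
        LinearMap.prod (LinearMap.codRestrict (LinearMap.ker π) d hd) π
      let bwd : (LinearMap.ker π × M) →ₗ[R] (Fin k → R) :=
        (LinearMap.ker π).subtype.comp (LinearMap.fst R _ M) + σ.comp (LinearMap.snd R _ M)
      have h1 : fwd.comp bwd = LinearMap.id := by
        apply LinearMap.ext; rintro ⟨⟨y, hy⟩, m⟩
        rw [LinearMap.mem_ker] at hy
        refine Prod.ext (Subtype.ext ?_) ?_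
        · show y + σ m - σ (π (y + σ m)) = y
          simp [hy, hσ']
        · show π (y + σ m) = m
          simp [hy, hσ']
      have h2 : bwd.comp fwd = LinearMap.id := by
        apply LinearMap.ext; intro x
        show (x - σ (π x)) + σ (π x) = x
        abel
      let eK : (Fin k → R) ≃ₗ[R] (LinearMap.ker π × M) := LinearEquiv.ofLinear fwd bwd h1 h2
      have hkerproj : Module.Projective R (LinearMap.ker π) := by
        have hfree : Module.Projective R (LinearMap.ker π × M) :=
          Module.Projective.of_equiv eK
        exact Module.Projective.of_split (LinearMap.inl R _ M) (LinearMap.fst R _ M)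
          (by apply LinearMap.ext; intro y; rfl)
      obtain ⟨n, m, ⟨eker⟩⟩ := ih (LinearMap.ker π) hkerproj hker
      refine ⟨m, k + n, ⟨?_⟩⟩
      have step1 : (M × (Fin m → R)) ≃ₗ[R] (M × (LinearMap.ker π × (Fin n → R))) :=
        LinearEquiv.prodCongr (LinearEquiv.refl R M) eker.symm
      have step2 : (M × (LinearMap.ker π × (Fin n → R))) ≃ₗ[R]
          ((M × LinearMap.ker π) × (Fin n → R)) :=
        (LinearEquiv.prodAssoc R M (LinearMap.ker π) (Fin n → R)).symm
      have step3 : ((M × LinearMap.ker π) × (Fin n → R)) ≃ₗ[R]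
          ((Fin k → R) × (Fin n → R)) :=
        LinearEquiv.prodCongr ((LinearEquiv.prodComm R M (LinearMap.ker π)).trans eK.symm)
          (LinearEquiv.refl R (Fin n → R))
      have step4 : ((Fin k → R) × (Fin n → R)) ≃ₗ[R] (Fin (k + n) → R) :=
        (LinearEquiv.sumArrowLequivProdArrow (Fin k) (Fin n) R R).symm.trans
          (LinearEquiv.funCongrLeft R R finSumFinEquiv.symm)
      exact ((step1.trans step2).trans step3).trans step4

end Key

/-- let `R` be a commutative ring in which every finite module admits a
finite free resolution, and in which every unimodular tuple `(f₁, …, f_r)` (one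
generating the unit ideal) is equivalent to `(1, 0, …, 0)` via a matrix in `GL_r(R)`.
Then every finite projective `R`-module is free. -/
theorem stmt6 (R : Type u) [CommRing R]
    (hFFR : ∀ (M : Type u) [AddCommGroup M] [Module R M], Module.Finite R M →
      HasFiniteFreeResolution R M)
    (hUnimod : ∀ (r : ℕ) (f : Fin r → R), Ideal.span (Set.range f) = ⊤ →
      ∃ M : GL (Fin r) R, (M : Matrix (Fin r) (Fin r) R).mulVec f = fun i : Fin r => if (i : ℕ) = 0 then (1 : R) else (0 : R))
    (P : Type u) [AddCommGroup P] [Module R P]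
    [Module.Finite R P] (hproj : Module.Projective R P) :
    Module.Free R P := by
  obtain ⟨s, hs⟩ := hFFR P inferInstance
  obtain ⟨n, m, ⟨e⟩⟩ := auxFFRStablyFree s P hproj hs
  exact auxStablyFree hUnimod n P ⟨m, ⟨e⟩⟩
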